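/- The family F̂⁻ is admissible, where for 0 ≤ n ≤ 2, F̂⁻_n(r) is the coefficient of z^{−r} in the Laurent polynomial (z − z^{−1})^{2−n}, and for n ≥ 3, F̂⁻_n(r) is the coefficient of z^{−r} in (−∑_{i≥0} z^{2i+1})^{n−2}. -/

import Mathlib

/-- A family of functions `F : ℕ → ℤ → ℚ` is admissible if
(A1) `F 2 0 = 1` and `F 2 r = 0` for `r ≠ 0`, and
(A2) for all `n ≥ 1` and `r ∈ ℤ`, `F n (r+1) - F n (r-1) = F (n-1) r`. -/
def Admissible (F : ℕ → ℤ → ℚ) : Prop :=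
  (F 2 0 = 1 ∧ ∀ r : ℤ, r ≠ 0 → F 2 r = 0) ∧
  (∀ n : ℕ, 1 ≤ n → ∀ r : ℤ, F n (r + 1) - F n (r - 1) = F (n - 1) r)

/-- The coefficient of `z^{-r}` in the Laurent polynomial `(z - z⁻¹)^(2-n)` (for `n ≤ 2`). -/
noncomputable def lowCoeff (n : ℕ) (r : ℤ) : ℚ :=
  ((LaurentPolynomial.T 1 - LaurentPolynomial.T (-1) : LaurentPolynomial ℚ) ^ (2 - n)).coeff (-r)

/-- The power series `∑_{i ≥ 0} w^(2i+1)`, i.e. the expansion of `(w⁻¹ - w)⁻¹·(-1)`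
used in the expansions of `(z - z⁻¹)⁻¹` for `|z| > 1` (with `w = z⁻¹`) and `|z| < 1`
(with `w = z`, up to sign). -/
noncomputable def Sser : PowerSeries ℚ := PowerSeries.mk fun i => if Odd i then 1 else 0

/-- `F̂⁺_n(r)`: for `n ≤ 2`, the coefficient of `z^{-r}` in `(z - z⁻¹)^(2-n)`;
for `n ≥ 3`, the coefficient of `z^{-r}` in `(∑_{i ≥ 0} z^{-(2i+1)})^(n-2)`,
which equals the coefficient of `w^r` in `Sser^(n-2)` (and `0` for `r < 0`). -/
noncomputable def Fhatplus (n : ℕ) (r : ℤ) : ℚ :=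
  if n ≤ 2 then lowCoeff n r
  else if 0 ≤ r then PowerSeries.coeff r.toNat (Sser ^ (n - 2)) else 0

/-- `F̂⁻_n(r)`: for `n ≤ 2`, the coefficient of `z^{-r}` in `(z - z⁻¹)^(2-n)`;
for `n ≥ 3`, the coefficient of `z^{-r}` in `(-∑_{i ≥ 0} z^(2i+1))^(n-2)`,
which equals the coefficient of `z^{-r}` in `(-Sser)^(n-2)` (and `0` for `r > 0`). -/
noncomputable def Fhatminus (n : ℕ) (r : ℤ) : ℚ :=
  if n ≤ 2 then lowCoeff n r
  else if r ≤ 0 then PowerSeries.coeff (-r).toNat ((-Sser) ^ (n - 2)) else 0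

/-- `F̂_n(r)`: the average of `F̂⁺_n(r)` and `F̂⁻_n(r)`
(for `n ≤ 2` both are the coefficient of `z^{-r}` in `(z - z⁻¹)^(2-n)`). -/
noncomputable def Fhat (n : ℕ) (r : ℤ) : ℚ := (Fhatplus n r + Fhatminus n r) / 2

open PowerSeries in
lemma Sser_key : (1 - PowerSeries.X ^ 2) * Sser = PowerSeries.X := by
  ext n
  rw [sub_mul, one_mul, map_sub, coeff_X_pow_mul']
  rcases n with _ | _ | n
  · simp [Sser]
  · simp [Sser]
  · rw [show n + 1 + 1 = n + 2 by ring]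
    simp [Sser, Nat.odd_add, coeff_X, parity_simps]

open PowerSeries in
lemma SH_eq (H : PowerSeries ℚ) : Sser * H - PowerSeries.X ^ 2 * (Sser * H) = PowerSeries.X * H := by
  calc Sser * H - PowerSeries.X ^ 2 * (Sser * H) = ((1 - PowerSeries.X ^ 2) * Sser) * H := by ring
  _ = PowerSeries.X * H := by rw [Sser_key]

open PowerSeries in
lemma Sser_rec (H : PowerSeries ℚ) (s : ℕ) :
    coeff (s + 2) (Sser * H) - coeff s (Sser * H) = coeff (s + 1) H := by
  have h := congrArg (coeff (s + 2)) (SH_eq H)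
  rwa [map_sub, coeff_X_pow_mul, show s + 2 = (s + 1) + 1 by ring, coeff_succ_X_mul] at h

open PowerSeries in
lemma Sser_c1 (H : PowerSeries ℚ) : coeff 1 (Sser * H) = coeff 0 H := by
  have h := congrArg (coeff 1) (SH_eq H)
  rwa [map_sub, coeff_X_pow_mul', if_neg (by omega), sub_zero,
    show (1:ℕ) = 0 + 1 by ring, coeff_succ_X_mul] at h

open PowerSeries in
lemma Sser_c0 (H : PowerSeries ℚ) : coeff 0 (Sser * H) = 0 := by
  have : constantCoeff Sser = 0 := by simp [Sser]
  simp [coeff_zero_eq_constantCoeff, map_mul, this]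

lemma lowC2 (r : ℤ) : lowCoeff 2 r = if r = 0 then 1 else 0 := by
  rw [lowCoeff, show (2:ℕ) - 2 = 0 from rfl, pow_zero]
  rw [← LaurentPolynomial.T_zero, LaurentPolynomial.T_apply]
  split_ifs <;> first | rfl | omega

lemma lowC1 (r : ℤ) : lowCoeff 1 r =
    (if r = -1 then (1:ℚ) else 0) - (if r = 1 then 1 else 0) := by
  rw [lowCoeff, show (2:ℕ) - 1 = 1 from rfl, pow_one]
  simp only [AddMonoidAlgebra.coeff_sub, Finsupp.sub_apply, LaurentPolynomial.T_apply]
  congr 1 <;> { split_ifs <;> first | rfl | omega }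

lemma lowC0 (r : ℤ) : lowCoeff 0 r =
    ((if r = -2 then (1:ℚ) else 0) - (if r = 0 then 1 else 0)) - ((if r = 0 then 1 else 0) - (if r = 2 then 1 else 0)) := by
  rw [lowCoeff, show (2:ℕ) - 0 = 2 from rfl]
  have : (LaurentPolynomial.T 1 - LaurentPolynomial.T (-1) : LaurentPolynomial ℚ) ^ (2:ℕ) =
      (LaurentPolynomial.T 2 - LaurentPolynomial.T 0) - (LaurentPolynomial.T 0 - LaurentPolynomial.T (-2)) := by
    rw [show (-2:ℤ) = -1 + -1 by ring, show (2:ℤ) = 1 + 1 by ring, show (0:ℤ) = 1 + -1 by ring,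
      LaurentPolynomial.T_add, LaurentPolynomial.T_add, LaurentPolynomial.T_add]
    ring
  rw [this]
  simp only [AddMonoidAlgebra.coeff_sub, Finsupp.sub_apply, LaurentPolynomial.T_apply]
  congr 2 <;> { split_ifs <;> first | rfl | omega }

/-- The family `F̂⁻` is admissible. -/
theorem Fhatminus_admissible : Admissible Fhatminus := by
  constructor
  · constructor
    · norm_num [Fhatminus, lowC2]
    · intro r hr
      norm_num [Fhatminus, lowC2, hr]
  · intro n hn r
    match n, hn with
    | 1, _ =>
      have e : ∀ k : ℕ, k ≤ 2 → ∀ x : ℤ, Fhatminus k x = lowCoeff k x := by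
        intro k hk x; simp [Fhatminus, hk]
      rw [show (1:ℕ) - 1 = 0 from rfl, e 1 (by norm_num), e 1 (by norm_num), e 0 (by norm_num),
        lowC1, lowC1, lowC0]
      split_ifs <;> first | omega | norm_num
    | 2, _ =>
      have e : ∀ k : ℕ, k ≤ 2 → ∀ x : ℤ, Fhatminus k x = lowCoeff k x := by
        intro k hk x; simp [Fhatminus, hk]
      rw [show (2:ℕ) - 1 = 1 from rfl, e 2 (by norm_num), e 2 (by norm_num), e 1 (by norm_num),
        lowC2, lowC2, lowC1]
      split_ifs <;> first | omega | norm_num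
    | 3, _ =>
      simp only [Fhatminus,
        if_neg (by norm_num : ¬ (3:ℕ) ≤ 2), show (3:ℕ) - 2 = 1 from rfl, pow_one, map_neg,
        show (3:ℕ) - 1 = 2 from rfl, if_pos (by norm_num : (2:ℕ) ≤ 2)]
      rw [lowC2]
      rcases lt_trichotomy r 0 with h | h | h
      · obtain ⟨t, rfl⟩ : ∃ t : ℕ, r = -(t:ℤ) - 1 := ⟨(-(r+1)).toNat, by omega⟩
        rw [if_pos (by omega : -(t:ℤ) - 1 + 1 ≤ 0), if_pos (by omega : -(t:ℤ) - 1 - 1 ≤ 0),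
          if_neg (by omega : ¬ -(t:ℤ) - 1 = 0)]
        have e1 : (-(-(t:ℤ) - 1 + 1)).toNat = t := by omega
        have e2 : (-(-(t:ℤ) - 1 - 1)).toNat = t + 2 := by omega
        rw [e1, e2]
        rcases Nat.even_or_odd t with hp | hp <;>
          simp [Sser, hp, Nat.odd_add, Nat.even_add, parity_simps]
      · subst h
        norm_num [Sser]
      · rcases eq_or_lt_of_le (by omega : (1:ℤ) ≤ r) with h1 | h1
        · rw [← h1]
          norm_num [Sser]
        · rw [if_neg (by omega : ¬ r + 1 ≤ 0), if_neg (by omega : ¬ r - 1 ≤ 0), if_neg (by omega)]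
          norm_num
    | (m + 4), _ =>
      have h2 : ¬ (m + 4 ≤ 2) := by omega
      have h3 : ¬ (m + 4 - 1 ≤ 2) := by omega
      simp only [Fhatminus, if_neg h2, if_neg h3,
        show m + 4 - 2 = (m + 1) + 1 by omega, show m + 4 - 1 - 2 = m + 1 by omega]
      set H : PowerSeries ℚ := (-Sser) ^ (m + 1) with hH
      have hG : (-Sser) ^ ((m + 1) + 1) = -(Sser * H) := by rw [pow_succ, hH]; ring
      rw [hG]
      rcases lt_trichotomy r 0 with h | h | h
      · obtain ⟨t, rfl⟩ : ∃ t : ℕ, r = -(t:ℤ) - 1 := ⟨(-(r+1)).toNat, by omega⟩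
        rw [if_pos (by omega : -(t:ℤ) - 1 + 1 ≤ 0), if_pos (by omega : -(t:ℤ) - 1 - 1 ≤ 0),
          if_pos (by omega : -(t:ℤ) - 1 ≤ 0)]
        have e1 : (-(-(t:ℤ) - 1 + 1)).toNat = t := by omega
        have e2 : (-(-(t:ℤ) - 1 - 1)).toNat = t + 2 := by omega
        have e3 : (-(-(t:ℤ) - 1)).toNat = t + 1 := by omega
        rw [e1, e2, e3, map_neg, map_neg]
        have := Sser_rec H t
        linarith
      · subst h
        rw [if_neg (by omega : ¬ (0:ℤ) + 1 ≤ 0), if_pos (by norm_num : (0:ℤ) - 1 ≤ 0),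
          if_pos le_rfl]
        have e1 : (-((0:ℤ) - 1)).toNat = 1 := by norm_num
        have e2 : (-(0:ℤ)).toNat = 0 := by norm_num
        rw [e1, e2, map_neg, Sser_c1]
        ring
      · rcases eq_or_lt_of_le (by omega : (1:ℤ) ≤ r) with h1 | h1
        · rw [← h1]
          rw [if_neg (by omega : ¬ (1:ℤ) + 1 ≤ 0), if_pos (by norm_num : (1:ℤ) - 1 ≤ 0),
            if_neg (by omega : ¬ (1:ℤ) ≤ 0)]
          have e1 : (-((1:ℤ) - 1)).toNat = 0 := by norm_num
          rw [e1, map_neg, Sser_c0]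
          ring
        · rw [if_neg (by omega : ¬ r + 1 ≤ 0), if_neg (by omega : ¬ r - 1 ≤ 0), if_neg (by omega)]
          norm_num
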